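/- Let $a,b\in\mathbb{N}$ with $1\le a\le b$, $c,d\in\mathbb{R}$, and $0<\delta\le 1/2$. Then the Lebesgue measure of $\{x\in[0,1]:\|ax+c\|\cdot\|bx+d\|<\delta^2\}$ is at most $C(\delta^2\log(1/\delta)+\gcd(a,b)(\delta^2/(ab))^{1/2})$ for an absolute constant $C$. -/

import Mathlib

open Set MeasureTheory

/-- Distance from `x` to the nearest integer. -/
noncomputable def nint (x : ℝ) : ℝ := |x - round x|

/-- `log` with the convention that `log x = 1` for `x ≤ e`. -/
noncomputable def clog (x : ℝ) : ℝ := max 1 (Real.log x)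

open Finset

lemma count_ap (L U q : ℤ) (hq : 0 < q) (s : Finset ℤ)
    (hs : ∀ m ∈ s, L ≤ m ∧ m ≤ U)
    (hdvd : ∀ m ∈ s, ∀ m' ∈ s, q ∣ m - m') :
    s.card ≤ ((U - L) / q + 1).toNat := by
  rcases s.eq_empty_or_nonempty with h | h
  · simp [h]
  set m₁ := s.min' h with hm₁def
  have hm₁s : m₁ ∈ s := s.min'_mem h
  have key : ∀ m ∈ s, (m - m₁) / q ∈ Finset.Icc (0:ℤ) ((U - L) / q) := by
    intro m hm
    rw [Finset.mem_Icc]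
    constructor
    · exact Int.ediv_nonneg (by linarith [s.min'_le m hm]) hq.le
    · exact Int.ediv_le_ediv hq (by linarith [(hs m hm).2, (hs m₁ hm₁s).1])
  have hinj : Set.InjOn (fun m => (m - m₁) / q) s := by
    intro m hm m' hm' hEq
    have h1 : q * ((m - m₁) / q) = m - m₁ := Int.mul_ediv_cancel' (hdvd m hm m₁ hm₁s)
    have h2 : q * ((m' - m₁) / q) = m' - m₁ := Int.mul_ediv_cancel' (hdvd m' hm' m₁ hm₁s)
    simp only at hEq
    rw [hEq] at h1
    omega
  calc s.card ≤ (Finset.Icc (0:ℤ) ((U - L) / q)).card :=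
        Finset.card_le_card_of_injOn _ key hinj
    _ = ((U - L) / q + 1).toNat := by rw [Int.card_Icc]; ring_nf

set_option maxHeartbeats 1000000 in

lemma exists_pow2 (x : ℝ) (hx : 1 ≤ x) : ∃ n : ℕ, (2:ℝ)^n ≤ x ∧ x < 2^(n+1) := by
  have hx0 : (0:ℝ) < x := by linarith
  have hlogb : 0 ≤ Real.logb 2 x := Real.logb_nonneg one_lt_two hx
  refine ⟨⌊Real.logb 2 x⌋.toNat, ?_, ?_⟩
  · have h1 : ((⌊Real.logb 2 x⌋.toNat : ℕ) : ℝ) ≤ Real.logb 2 x := by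
      calc ((⌊Real.logb 2 x⌋.toNat : ℕ) : ℝ) = ((⌊Real.logb 2 x⌋ : ℤ) : ℝ) := by
            exact_mod_cast Int.toNat_of_nonneg (Int.floor_nonneg.mpr hlogb)
        _ ≤ Real.logb 2 x := Int.floor_le _
    calc (2:ℝ)^(⌊Real.logb 2 x⌋.toNat) = (2:ℝ)^((⌊Real.logb 2 x⌋.toNat : ℕ):ℝ) := by
          rw [Real.rpow_natCast]
      _ ≤ (2:ℝ)^(Real.logb 2 x) := Real.rpow_le_rpow_of_exponent_le one_le_two h1
      _ = x := Real.rpow_logb two_pos (by norm_num) hx0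
  · have h2 : Real.logb 2 x < ((⌊Real.logb 2 x⌋.toNat : ℕ) : ℝ) + 1 := by
      have := Int.lt_floor_add_one (Real.logb 2 x)
      have h3 : (⌊Real.logb 2 x⌋ : ℝ) ≤ (⌊Real.logb 2 x⌋.toNat : ℝ) := by
        exact_mod_cast Int.self_le_toNat _
      linarith
    calc x = (2:ℝ)^(Real.logb 2 x) := (Real.rpow_logb two_pos (by norm_num) hx0).symm
      _ < (2:ℝ)^(((⌊Real.logb 2 x⌋.toNat : ℕ):ℝ) + 1) :=
          Real.rpow_lt_rpow_of_exponent_lt one_lt_two h2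
      _ = (2:ℝ)^(⌊Real.logb 2 x⌋.toNat + 1) := by
          rw [← Real.rpow_natCast (2:ℝ) (⌊Real.logb 2 x⌋.toNat + 1)]
          norm_num

lemma sum_min_geom (u v : ℝ) (hu : 0 < u) (hv : 0 < v) (K : ℕ) :
    ∑ k ∈ Finset.Icc 1 K, min (u * (1/2:ℝ)^k) (v * 2^k) ≤ 4 * Real.sqrt (u * v) := by
  have hP0 : 0 ≤ Real.sqrt (u*v) := Real.sqrt_nonneg _
  have sum_half : ∀ N : ℕ, ∑ k ∈ Finset.range N, ((1:ℝ)/2)^k = 2 - 2*(1/2:ℝ)^N := by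
    intro N
    rw [geom_sum_eq (by norm_num)]
    field_simp
    ring
  rcases le_total u v with huv | huv
  · -- u ≤ v : bound every term by u * (1/2)^k
    have hu_le : u ≤ Real.sqrt (u*v) := by
      rw [show u*v = u*v from rfl]
      nlinarith [Real.sq_sqrt (by positivity : (0:ℝ) ≤ u*v), Real.sqrt_nonneg (u*v)]
    calc ∑ k ∈ Finset.Icc 1 K, min (u * (1/2:ℝ)^k) (v * 2^k)
        ≤ ∑ k ∈ Finset.Icc 1 K, u * (1/2:ℝ)^k :=
          Finset.sum_le_sum (fun k _ => min_le_left _ _)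
      _ ≤ ∑ k ∈ Finset.range (K+1), u * (1/2:ℝ)^k := by
          apply Finset.sum_le_sum_of_subset_of_nonneg
          · intro k hk
            rw [Finset.mem_Icc] at hk
            exact Finset.mem_range.mpr (by omega)
          · intro k _ _
            positivity
      _ = u * (2 - 2*(1/2:ℝ)^(K+1)) := by rw [← Finset.mul_sum, sum_half]
      _ ≤ 2*u := by nlinarith [pow_pos (by norm_num : (0:ℝ) < 1/2) (K+1)]
      _ ≤ 4 * Real.sqrt (u*v) := by linarith
  · -- v ≤ u
    obtain ⟨k₀, hk₀1, hk₀2⟩ := exists_pow2 (Real.sqrt (u/v)) (by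
      rw [show (1:ℝ) = Real.sqrt 1 by simp]
      exact Real.sqrt_le_sqrt ((one_le_div hv).mpr huv))
    have ht0 : (0:ℝ) < 2^k₀ := by positivity
    have hsq : Real.sqrt (u/v) ^ 2 = u/v := Real.sq_sqrt (by positivity)
    have hPsq : Real.sqrt (u*v) ^ 2 = u*v := Real.sq_sqrt (by positivity)
    have key1 : v * 2^(k₀+1) ≤ 2 * Real.sqrt (u*v) := by
      have h1 : v * 2^k₀ ≤ Real.sqrt (u*v) := by
        rw [Real.le_sqrt (by positivity) (by positivity)]
        have hss : Real.sqrt (u/v) * Real.sqrt (u/v) = u/v :=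
          Real.mul_self_sqrt (by positivity)
        have hmm : (2:ℝ)^k₀ * 2^k₀ ≤ u/v := by
          nlinarith [mul_le_mul hk₀1 hk₀1 ht0.le (Real.sqrt_nonneg (u/v))]
        have hvv : v * (u/v) = u := by field_simp
        nlinarith [mul_le_mul_of_nonneg_left hmm (by positivity : (0:ℝ) ≤ v*v)]
      calc v * 2^(k₀+1) = 2*(v*2^k₀) := by ring
        _ ≤ 2 * Real.sqrt (u*v) := by linarith
    have key2 : u * (1/2:ℝ)^k₀ ≤ 2 * Real.sqrt (u*v) := by
      have hhalf : u * (1/2:ℝ)^k₀ = u / 2^k₀ := by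
        rw [div_pow]; ring
      rw [hhalf]
      have h6 : u/v < (2*2^k₀)*(2*2^k₀) := by
        have hss : Real.sqrt (u/v) * Real.sqrt (u/v) = u/v :=
          Real.mul_self_sqrt (by positivity)
        have hp1 : (2:ℝ)^(k₀+1) = 2*2^k₀ := by ring
        nlinarith [hk₀2, Real.sqrt_nonneg (u/v)]
      have h7 : u < (2*2^k₀)*(2*2^k₀)*v := by
        rw [div_lt_iff₀ hv] at h6; linarith
      have h9 : u/(2*2^k₀) ≤ Real.sqrt (u*v) := by
        rw [Real.le_sqrt (by positivity) (by positivity), div_pow, div_le_iff₀ (by positivity)]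
        nlinarith [h7, hu]
      rw [div_le_iff₀ (by positivity)] at h9
      rw [div_le_iff₀ ht0]
      linarith [h9]
    -- split the sum
    have split := Finset.sum_filter_add_sum_filter_not (Finset.Icc 1 K) (fun k => k ≤ k₀)
        (fun k => min (u * (1/2:ℝ)^k) (v * 2^k))
    rw [← split]
    have part1 : ∑ k ∈ (Finset.Icc 1 K).filter (fun k => k ≤ k₀),
        min (u * (1/2:ℝ)^k) (v * 2^k) ≤ 2 * Real.sqrt (u*v) := by
      calc ∑ k ∈ (Finset.Icc 1 K).filter (fun k => k ≤ k₀), min (u * (1/2:ℝ)^k) (v * 2^k)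
          ≤ ∑ k ∈ (Finset.Icc 1 K).filter (fun k => k ≤ k₀), v * 2^k :=
            Finset.sum_le_sum (fun k _ => min_le_right _ _)
        _ ≤ ∑ k ∈ Finset.range (k₀+1), v * 2^k := by
            apply Finset.sum_le_sum_of_subset_of_nonneg
            · intro k hk
              simp only [Finset.mem_filter, Finset.mem_Icc] at hk
              exact Finset.mem_range.mpr (by omega)
            · intros; positivity
        _ = v * ((2^(k₀+1) - 1)/(2-1)) := by
            rw [← Finset.mul_sum, geom_sum_eq (by norm_num : (2:ℝ) ≠ 1)]
        _ ≤ v * 2^(k₀+1) := by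
            have : (0:ℝ) < 2^(k₀+1) := by positivity
            rw [show ((2:ℝ)-1) = 1 by norm_num, div_one]
            nlinarith
        _ ≤ 2 * Real.sqrt (u*v) := key1
    have part2 : ∑ k ∈ (Finset.Icc 1 K).filter (fun k => ¬ k ≤ k₀),
        min (u * (1/2:ℝ)^k) (v * 2^k) ≤ 2 * Real.sqrt (u*v) := by
      by_cases hKk : k₀ < K
      case neg =>
        have hempty : (Finset.Icc 1 K).filter (fun k => ¬ k ≤ k₀) = ∅ := by
          apply Finset.eq_empty_of_forall_notMem
          intro k hk
          simp only [Finset.mem_filter, Finset.mem_Icc] at hk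
          omega
        rw [hempty, Finset.sum_empty]; positivity
      case pos =>
        calc ∑ k ∈ (Finset.Icc 1 K).filter (fun k => ¬ k ≤ k₀), min (u * (1/2:ℝ)^k) (v * 2^k)
            ≤ ∑ k ∈ (Finset.Icc 1 K).filter (fun k => ¬ k ≤ k₀), u * (1/2:ℝ)^k :=
              Finset.sum_le_sum (fun k _ => min_le_left _ _)
          _ ≤ ∑ k ∈ Finset.range (K+1) \ Finset.range (k₀+1), u * (1/2:ℝ)^k := by
              apply Finset.sum_le_sum_of_subset_of_nonneg
              · intro k hk
                simp only [Finset.mem_filter, Finset.mem_Icc] at hk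
                simp only [Finset.mem_sdiff, Finset.mem_range]
                omega
              · intros; positivity
          _ = (∑ k ∈ Finset.range (K+1), u * (1/2:ℝ)^k)
              - ∑ k ∈ Finset.range (k₀+1), u * (1/2:ℝ)^k := by
              apply Finset.sum_sdiff_eq_sub
              intro k hk
              simp only [Finset.mem_range] at *
              omega
          _ = u * (2 - 2*(1/2:ℝ)^(K+1)) - u * (2 - 2*(1/2:ℝ)^(k₀+1)) := by
              rw [← Finset.mul_sum, ← Finset.mul_sum, sum_half, sum_half]
          _ = u * ((1/2:ℝ)^k₀) - 2*u*(1/2:ℝ)^(K+1) := by ring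
          _ ≤ u * (1/2:ℝ)^k₀ := by nlinarith [pow_pos (by norm_num : (0:ℝ)<1/2) (K+1)]
          _ ≤ 2 * Real.sqrt (u*v) := key2
    linarith

set_option maxHeartbeats 1000000 in
lemma lemE (a b : ℕ) (c d α β : ℝ) (ha : 1 ≤ a) (hab : a ≤ b)
    (hα0 : 0 < α) (hα1 : α ≤ 1) (hβ0 : 0 < β) :
    volume {x ∈ Set.Icc (0:ℝ) 1 | nint (a*x+c) < α ∧ nint (b*x+d) < β}
      ≤ ENNReal.ofReal (24*(α*β) + 12*(Nat.gcd a b)*(min (α/a) (β/b))) := by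
  classical
  have hb : 1 ≤ b := le_trans ha hab
  have hA : (0:ℝ) < a := by exact_mod_cast Nat.pos_of_ne_zero (by omega)
  have hB : (0:ℝ) < b := by exact_mod_cast Nat.pos_of_ne_zero (by omega)
  set g : ℕ := Nat.gcd a b with hgdef
  have hg0 : 0 < g := Nat.gcd_pos_of_pos_left _ (by omega)
  have hgR : (0:ℝ) < g := by exact_mod_cast hg0
  set e : ℝ := b*c - a*d with hedef
  set σ : ℝ := b*α + a*β with hσdef
  have hσ0 : 0 < σ := by positivity
  set mlo : ℤ := ⌊c⌋ with hmlo
  set mhi : ℤ := ⌊c⌋ + a + 1 with hmhi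
  set nlo : ℤ := ⌊d⌋ - ⌈β⌉ with hnlo
  set nhi : ℤ := ⌊d⌋ + b + ⌈β⌉ + 1 with hnhi
  set F : Finset (ℤ × ℤ) := ((Finset.Icc mlo mhi) ×ˢ (Finset.Icc nlo nhi)).filter
      (fun p => |(b:ℝ)*p.1 - (a:ℝ)*p.2 - e| < σ) with hF
  set I : ℤ × ℤ → Set ℝ := fun p =>
      {x | |(a:ℝ)*x + c - p.1| < α ∧ |(b:ℝ)*x + d - p.2| < β} with hI
  -- covering
  have cover : {x ∈ Set.Icc (0:ℝ) 1 | nint (a*x+c) < α ∧ nint (b*x+d) < β}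
      ⊆ ⋃ p ∈ F, I p := by
    rintro x ⟨⟨hx0, hx1⟩, h1, h2⟩
    set m : ℤ := round ((a:ℝ)*x + c) with hm0
    set n : ℤ := round ((b:ℝ)*x + d) with hn0
    have hm : |(a:ℝ)*x + c - m| < α := h1
    have hn : |(b:ℝ)*x + d - n| < β := h2
    obtain ⟨hmL, hmU⟩ := abs_lt.mp hm
    obtain ⟨hnL, hnU⟩ := abs_lt.mp hn
    have hax0 : (0:ℝ) ≤ a*x := by positivity
    have hax1 : (a:ℝ)*x ≤ a := by nlinarith
    have hbx0 : (0:ℝ) ≤ b*x := by positivity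
    have hbx1 : (b:ℝ)*x ≤ b := by nlinarith
    have hPF : (m, n) ∈ F := by
      rw [hF, Finset.mem_filter, Finset.mem_product]
      refine ⟨⟨Finset.mem_Icc.mpr ⟨?_, ?_⟩, Finset.mem_Icc.mpr ⟨?_, ?_⟩⟩, ?_⟩
      · have : (mlo:ℝ) < (m:ℝ) + 1 := by
          have := Int.floor_le c
          simp only [hmlo]
          push_cast
          linarith
        have : mlo < m + 1 := by exact_mod_cast this
        omega
      · have : (m:ℝ) < (mhi:ℝ) + 1 := by
          have := Int.lt_floor_add_one c
          simp only [hmhi]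
          push_cast
          linarith
        have : m < mhi + 1 := by exact_mod_cast this
        omega
      · have : (nlo:ℝ) < (n:ℝ) + 1 := by
          have := Int.floor_le d
          have := Int.le_ceil β
          simp only [hnlo]
          push_cast
          linarith
        have : nlo < n + 1 := by exact_mod_cast this
        omega
      · have : (n:ℝ) < (nhi:ℝ) := by
          have := Int.lt_floor_add_one d
          have := Int.le_ceil β
          simp only [hnhi]
          push_cast
          linarith
        have : n < nhi := by exact_mod_cast this
        omega
      · have hid : (b:ℝ)*(m:ℤ) - (a:ℝ)*(n:ℤ) - e
            = (a:ℝ)*((b:ℝ)*x + d - n) - (b:ℝ)*((a:ℝ)*x + c - m) := by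
          simp only [hedef]; push_cast; ring
        calc |(b:ℝ)*(m:ℤ) - (a:ℝ)*(n:ℤ) - e|
            = |(a:ℝ)*((b:ℝ)*x + d - n) - (b:ℝ)*((a:ℝ)*x + c - m)| := by rw [hid]
          _ ≤ |(a:ℝ)*((b:ℝ)*x + d - n)| + |(b:ℝ)*((a:ℝ)*x + c - m)| := abs_sub _ _
          _ = (a:ℝ)*|(b:ℝ)*x + d - n| + (b:ℝ)*|(a:ℝ)*x + c - m| := by
              rw [abs_mul, abs_mul, abs_of_nonneg hA.le, abs_of_nonneg hB.le]
          _ < a*β + b*α := by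
              have := mul_lt_mul_of_pos_left hn hA
              have := mul_lt_mul_of_pos_left hm hB
              linarith
          _ = σ := by rw [hσdef]; ring
    exact Set.mem_biUnion hPF ⟨hm, hn⟩
  -- measure of each piece
  have measI : ∀ p : ℤ × ℤ, volume (I p) ≤ ENNReal.ofReal (2 * min (α/a) (β/b)) := by
    intro p
    rcases le_total (α/(a:ℝ)) (β/(b:ℝ)) with hc | hc
    · rw [min_eq_left hc]
      have hsub : I p ⊆ Set.Ioo (((p.1:ℝ) - c - α)/a) (((p.1:ℝ) - c + α)/a) := by
        intro x hx
        obtain ⟨hx1, -⟩ := hx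
        rw [abs_lt] at hx1
        constructor
        · rw [div_lt_iff₀ hA]; linarith
        · rw [lt_div_iff₀ hA]; linarith
      refine le_trans (measure_mono hsub) ?_
      rw [Real.volume_Ioo]
      apply ENNReal.ofReal_le_ofReal
      rw [div_sub_div_same]
      rw [show ((p.1:ℝ) - c + α) - ((p.1:ℝ) - c - α) = 2*α by ring]
      rw [mul_div_assoc]
    · rw [min_eq_right hc]
      have hsub : I p ⊆ Set.Ioo (((p.2:ℝ) - d - β)/b) (((p.2:ℝ) - d + β)/b) := by
        intro x hx
        obtain ⟨-, hx2⟩ := hx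
        rw [abs_lt] at hx2
        constructor
        · rw [div_lt_iff₀ hB]; linarith
        · rw [lt_div_iff₀ hB]; linarith
      refine le_trans (measure_mono hsub) ?_
      rw [Real.volume_Ioo]
      apply ENNReal.ofReal_le_ofReal
      rw [div_sub_div_same]
      rw [show ((p.2:ℝ) - d + β) - ((p.2:ℝ) - d - β) = 2*β by ring]
      rw [mul_div_assoc]
  -- cardinality of fibers
  set a' : ℕ := a / g with ha'def
  set b' : ℕ := b / g with hb'def
  have ha'g : a' * g = a := Nat.div_mul_cancel (Nat.gcd_dvd_left a b)
  have hb'g : b' * g = b := Nat.div_mul_cancel (Nat.gcd_dvd_right a b)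
  have ha'pos : 0 < a' := by
    rcases Nat.eq_zero_or_pos a' with h | h
    · rw [h, zero_mul] at ha'g; omega
    · exact h
  have hcop : Nat.Coprime a' b' := Nat.coprime_div_gcd_div_gcd hg0
  have fiber_card : ∀ w : ℤ,
      (F.filter (fun p => (b:ℤ)*p.1 - (a:ℤ)*p.2 = w)).card ≤ 3*g := by
    intro w
    set fp := F.filter (fun p => (b:ℤ)*p.1 - (a:ℤ)*p.2 = w) with hfp
    have hinj : Set.InjOn Prod.fst (fp : Set (ℤ × ℤ)) := by
      intro p hp p' hp' hfst
      have e1 : (b:ℤ)*p.1 - (a:ℤ)*p.2 = w := (Finset.mem_filter.mp hp).2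
      have e2 : (b:ℤ)*p'.1 - (a:ℤ)*p'.2 = w := (Finset.mem_filter.mp hp').2
      have : (a:ℤ)*p.2 = (a:ℤ)*p'.2 := by rw [hfst] at e1; linarith
      have h2 : p.2 = p'.2 := by
        have haZ : (a:ℤ) ≠ 0 := by exact_mod_cast (by omega : a ≠ 0)
        exact mul_left_cancel₀ haZ this
      exact Prod.ext_iff.mpr ⟨hfst, h2⟩
    have hcardim : fp.card = (fp.image Prod.fst).card :=
      (Finset.card_image_of_injOn hinj).symm
    set fM := fp.image Prod.fst with hfM
    have hbounds : ∀ m ∈ fM, mlo ≤ m ∧ m ≤ mhi := by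
      intro m hm
      obtain ⟨p, hp, rfl⟩ := Finset.mem_image.mp hm
      have := (Finset.mem_product.mp (Finset.mem_filter.mp
        ((Finset.mem_filter.mp hp).1)).1).1
      exact Finset.mem_Icc.mp this
    have hdvd : ∀ m ∈ fM, ∀ m' ∈ fM, (a':ℤ) ∣ m - m' := by
      intro m hm m' hm'
      obtain ⟨p, hp, rfl⟩ := Finset.mem_image.mp hm
      obtain ⟨p', hp', rfl⟩ := Finset.mem_image.mp hm'
      have e1 : (b:ℤ)*p.1 - (a:ℤ)*p.2 = w := (Finset.mem_filter.mp hp).2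
      have e2 : (b:ℤ)*p'.1 - (a:ℤ)*p'.2 = w := (Finset.mem_filter.mp hp').2
      have heq : (b:ℤ)*(p.1 - p'.1) = (a:ℤ)*(p.2 - p'.2) := by ring_nf; omega
      have hgeq : ((g:ℤ)*b')*(p.1 - p'.1) = ((g:ℤ)*a')*(p.2 - p'.2) := by
        have hA' : ((g:ℤ)*a') = (a:ℤ) := by exact_mod_cast by rw [mul_comm]; exact_mod_cast ha'g
        have hB' : ((g:ℤ)*b') = (b:ℤ) := by exact_mod_cast by rw [mul_comm]; exact_mod_cast hb'g
        rw [hA', hB']; exact heq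
      have hgZ : (g:ℤ) ≠ 0 := by exact_mod_cast hg0.ne'
      have heq' : (b':ℤ)*(p.1 - p'.1) = (a':ℤ)*(p.2 - p'.2) := by
        apply mul_left_cancel₀ hgZ
        rw [← mul_assoc, ← mul_assoc]; exact hgeq
      have hdd : (a':ℤ) ∣ (b':ℤ)*(p.1 - p'.1) := ⟨p.2 - p'.2, heq'⟩
      have hic : IsCoprime (a':ℤ) (b':ℤ) := by
        rw [Int.isCoprime_iff_gcd_eq_one, Int.gcd_natCast_natCast]
        exact hcop
      exact hic.dvd_of_dvd_mul_left hdd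
    have hcount := count_ap mlo mhi (a':ℤ) (by exact_mod_cast ha'pos) fM hbounds hdvd
    have hnum : ((mhi - mlo) / (a':ℤ) + 1).toNat ≤ 3*g := by
      have h1 : mhi - mlo = (a:ℤ) + 1 := by omega
      rw [h1]
      have h2 : ((a:ℤ) + 1) / (a':ℤ) ≤ (2*(a:ℤ)) / (a':ℤ) :=
        Int.ediv_le_ediv (by exact_mod_cast ha'pos) (by omega)
      have h3 : (2*(a:ℤ)) / (a':ℤ) = 2*(g:ℤ) := by
        have : (2*(a:ℤ)) = (2*(g:ℤ)) * (a':ℤ) := by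
          have : (a':ℤ) * (g:ℤ) = (a:ℤ) := by exact_mod_cast ha'g
          rw [← this]; ring
        rw [this, Int.mul_ediv_cancel _ (by exact_mod_cast ha'pos.ne')]
      rw [Int.toNat_le]
      push_cast
      omega
    rw [hcardim]
    exact le_trans hcount hnum
  -- cardinality of W
  set W := F.image (fun p => (b:ℤ)*p.1 - (a:ℤ)*p.2) with hW
  have cardF : F.card ≤ W.card * (3*g) := by
    rw [Finset.card_eq_sum_card_fiberwise
      (f := fun p => (b:ℤ)*p.1 - (a:ℤ)*p.2) (fun p hp => Finset.mem_image_of_mem _ hp)]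
    calc ∑ w ∈ W, (F.filter (fun p => (b:ℤ)*p.1 - (a:ℤ)*p.2 = w)).card
        ≤ W.card • (3*g) := Finset.sum_le_card_nsmul _ _ _ (fun w _ => fiber_card w)
      _ = W.card * (3*g) := smul_eq_mul ..
  have cardW : (W.card : ℝ) ≤ 2*σ/g + 1 := by
    have hWmem : ∀ w ∈ W, ⌈e - σ⌉ ≤ w ∧ w ≤ ⌊e + σ⌋ := by
      intro w hw
      obtain ⟨p, hp, rfl⟩ := Finset.mem_image.mp hw
      have habs : |(b:ℝ)*p.1 - (a:ℝ)*p.2 - e| < σ := (Finset.mem_filter.mp hp).2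
      rw [abs_lt] at habs
      constructor
      · rw [Int.ceil_le]; push_cast; linarith
      · rw [Int.le_floor]; push_cast; linarith
    have hWdvd : ∀ w ∈ W, ∀ w' ∈ W, (g:ℤ) ∣ w - w' := by
      have hgw : ∀ w ∈ W, (g:ℤ) ∣ w := by
        intro w hw
        obtain ⟨p, hp, rfl⟩ := Finset.mem_image.mp hw
        have hga : (g:ℤ) ∣ (a:ℤ) := Int.natCast_dvd_natCast.mpr (Nat.gcd_dvd_left a b)
        have hgb : (g:ℤ) ∣ (b:ℤ) := Int.natCast_dvd_natCast.mpr (Nat.gcd_dvd_right a b)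
        exact dvd_sub (hgb.mul_right _) (hga.mul_right _)
      intro w hw w' hw'
      exact dvd_sub (hgw w hw) (hgw w' hw')
    have hcount := count_ap ⌈e - σ⌉ ⌊e + σ⌋ (g:ℤ) (by exact_mod_cast hg0) W hWmem hWdvd
    set Z : ℤ := ⌊e + σ⌋ - ⌈e - σ⌉ with hZ
    have hZR : (Z:ℝ) ≤ 2*σ := by
      have h1 := Int.floor_le (e + σ)
      have h2 := Int.le_ceil (e - σ)
      simp only [hZ]
      push_cast
      linarith
    have : ((Z / (g:ℤ) + 1).toNat : ℝ) ≤ 2*σ/g + 1 := by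
      by_cases hZ0 : 0 ≤ Z
      · have hq : (0:ℤ) < g := by exact_mod_cast hg0
        have h4 : (0:ℤ) ≤ Z / g := Int.ediv_nonneg hZ0 hq.le
        have h5 : ((Z / (g:ℤ) + 1).toNat : ℤ) = Z / g + 1 := Int.toNat_of_nonneg (by omega)
        have h6' : (Z / (g:ℤ)) * (g:ℤ) ≤ Z :=
          Int.ediv_mul_le Z (by exact_mod_cast hg0.ne' : (g:ℤ) ≠ 0)
        have h6 : (((Z / (g:ℤ)) : ℤ) : ℝ) ≤ (Z:ℝ)/g := by
          rw [le_div_iff₀ hgR]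
          exact_mod_cast h6'
        have h7 : (Z:ℝ)/g ≤ 2*σ/g := by gcongr
        have h8 : (((Z / (g:ℤ) + 1).toNat : ℤ) : ℝ) = ((Z / (g:ℤ) : ℤ) : ℝ) + 1 := by
          rw [h5]; push_cast; ring
        calc ((Z / (g:ℤ) + 1).toNat : ℝ) = ((Z / (g:ℤ) : ℤ) : ℝ) + 1 := by exact_mod_cast h8
          _ ≤ 2*σ/g + 1 := by linarith
      · have hq : (0:ℤ) < g := by exact_mod_cast hg0
        have : Z / (g:ℤ) < 0 := Int.ediv_neg_of_neg_of_pos (by omega) hq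
        have h5 : (Z / (g:ℤ) + 1).toNat = 0 := by omega
        rw [h5]
        have : 0 < 2*σ/g := by positivity
        push_cast
        linarith
    calc (W.card : ℝ) ≤ ((Z / (g:ℤ) + 1).toNat : ℝ) := by exact_mod_cast hcount
      _ ≤ 2*σ/g + 1 := this
  -- combine
  have hmin0 : (0:ℝ) ≤ min (α/a) (β/b) := le_min (by positivity) (by positivity)
  have hcardR : (F.card : ℝ) ≤ 6*σ + 3*g := by
    have h1 : (F.card : ℝ) ≤ (W.card : ℝ) * (3*g) := by exact_mod_cast cardF
    have h2 : (W.card:ℝ) * (3*g) ≤ (2*σ/g + 1) * (3*g) :=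
      mul_le_mul_of_nonneg_right cardW (by positivity)
    have h3 : (2*σ/g + 1) * (3*(g:ℝ)) = 6*σ + 3*g := by field_simp; ring
    linarith
  have hfinal : (F.card : ℝ) * (2 * min (α/a) (β/b))
      ≤ 24*(α*β) + 12*(g:ℝ)*(min (α/a) (β/b)) := by
    have hm1 : min (α/a) (β/b) ≤ α/a := min_le_left _ _
    have hm2 : min (α/a) (β/b) ≤ β/b := min_le_right _ _
    have key : σ * min (α/a) (β/b) ≤ 2*(α*β) := by
      have k1 : (b:ℝ)*α * min (α/a) (β/b) ≤ b*α*(β/b) :=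
        mul_le_mul_of_nonneg_left hm2 (by positivity)
      have k2 : (a:ℝ)*β * min (α/a) (β/b) ≤ a*β*(α/a) :=
        mul_le_mul_of_nonneg_left hm1 (by positivity)
      have e1 : (b:ℝ)*α*(β/b) = α*β := by field_simp
      have e2 : (a:ℝ)*β*(α/a) = α*β := by field_simp
      rw [e1] at k1
      rw [e2] at k2
      have expand : σ * min (α/a) (β/b)
          = (b:ℝ)*α * min (α/a) (β/b) + (a:ℝ)*β * min (α/a) (β/b) := by
        rw [hσdef]; ring
      rw [expand]
      linarith
    have h4 : (F.card : ℝ) * (2 * min (α/a) (β/b)) ≤ (6*σ+3*(g:ℝ)) * (2*min (α/a) (β/b)) :=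
      mul_le_mul_of_nonneg_right hcardR (by positivity)
    have expand2 : (6*σ+3*(g:ℝ)) * (2*min (α/a) (β/b))
        = 12*(σ * min (α/a) (β/b)) + 6*((g:ℝ) * min (α/a) (β/b)) := by ring
    rw [expand2] at h4
    have hgmin : 12*(g:ℝ)*(min (α/a) (β/b)) = 12*((g:ℝ) * min (α/a) (β/b)) := by ring
    linarith [key, h4, mul_nonneg hgR.le hmin0]
  calc volume {x ∈ Set.Icc (0:ℝ) 1 | nint (a*x+c) < α ∧ nint (b*x+d) < β}
      ≤ volume (⋃ p ∈ F, I p) := measure_mono cover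
    _ ≤ ∑ p ∈ F, volume (I p) := measure_biUnion_finset_le _ _
    _ ≤ F.card • ENNReal.ofReal (2 * min (α/a) (β/b)) :=
        Finset.sum_le_card_nsmul _ _ _ (fun p _ => measI p)
    _ = ENNReal.ofReal ((F.card : ℝ) * (2 * min (α/a) (β/b))) := by
        rw [nsmul_eq_mul, ← ENNReal.ofReal_natCast, ← ENNReal.ofReal_mul (by positivity)]
    _ ≤ ENNReal.ofReal (24*(α*β) + 12*(Nat.gcd a b)*(min (α/a) (β/b))) :=
        ENNReal.ofReal_le_ofReal hfinal

set_option maxHeartbeats 1000000 in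
theorem stmt7 :
    ∃ C : ℝ, 0 < C ∧ ∀ (a b : ℕ) (c d δ : ℝ), 1 ≤ a → a ≤ b → 0 < δ → δ ≤ 1 / 2 →
      volume {x ∈ Icc (0:ℝ) 1 | nint (a * x + c) * nint (b * x + d) < δ ^ 2}
        ≤ ENNReal.ofReal (C * (δ ^ 2 * clog (1 / δ)
            + (Nat.gcd a b : ℝ) * (δ ^ 2 / (a * b)) ^ ((1:ℝ) / 2))) := by
  refine ⟨1000, by norm_num, ?_⟩
  intro a b c d δ ha hab hδ0 hδh
  have hb : 1 ≤ b := le_trans ha hab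
  have hA : (0:ℝ) < a := by exact_mod_cast Nat.pos_of_ne_zero (by omega)
  have hB : (0:ℝ) < b := by exact_mod_cast Nat.pos_of_ne_zero (by omega)
  set g : ℕ := Nat.gcd a b with hgdef
  have hg0 : 0 < g := Nat.gcd_pos_of_pos_left _ (by omega)
  have hgR : (0:ℝ) < g := by exact_mod_cast hg0
  have hδ1 : δ ≤ 1 := by linarith
  set K : ℕ := ⌊2 * Real.logb 2 (1/δ)⌋.toNat with hKdef
  have hnle : ∀ y : ℝ, nint y ≤ 1/2 := fun y => abs_sub_round y
  have hnnn : ∀ y : ℝ, 0 ≤ nint y := fun y => abs_nonneg _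
  -- covering
  have cover : {x ∈ Icc (0:ℝ) 1 | nint (a * x + c) * nint (b * x + d) < δ ^ 2}
      ⊆ ({x ∈ Icc (0:ℝ) 1 | nint (a*x+c) < δ^2 ∧ nint (b*x+d) < 1}
        ∪ ⋃ i ∈ Finset.range K, {x ∈ Icc (0:ℝ) 1 |
            nint (a*x+c) < (1/2:ℝ)^i ∧ nint (b*x+d) < δ^2 * 2^(i+2)}) := by
    rintro x ⟨hx, hprod⟩
    by_cases hcase : nint ((a:ℝ)*x+c) < δ^2
    · left
      exact ⟨hx, hcase, lt_of_le_of_lt (hnle _) (by norm_num)⟩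
    · right
      push_neg at hcase
      set t := nint ((a:ℝ)*x+c) with htdef
      have ht0 : 0 < t := lt_of_lt_of_le (by positivity) hcase
      have ht2 : t ≤ 1/2 := hnle _
      have hu : nint ((b:ℝ)*x+d) < δ^2 * (1/t) := by
        rw [mul_one_div, lt_div_iff₀ ht0, mul_comm]
        exact hprod
      have h1t : (2:ℝ) ≤ 1/t := by
        rw [le_div_iff₀ ht0]; linarith
      obtain ⟨j, hj1, hj2⟩ := exists_pow2 (1/t) (by linarith)
      have hjpos : 1 ≤ j := by
        by_contra h
        push_neg at h
        have hj0 : j = 0 := by omega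
        subst hj0
        have : (1:ℝ)/t < 2 := by simpa using hj2
        linarith
      have hjK : j ≤ K := by
        have hlogt : (j:ℝ) ≤ 2 * Real.logb 2 (1/δ) := by
          have e1 : Real.logb 2 ((2:ℝ)^j) = j := by
            rw [Real.logb_pow, Real.logb_self_eq_one one_lt_two]
            · ring
          have e2 : (1:ℝ)/t ≤ (1/δ)^2 := by
            have : δ^2 ≤ t := hcase
            rw [div_pow, one_pow, div_le_div_iff₀ ht0 (by positivity)]
            nlinarith
          have e3 : Real.logb 2 ((2:ℝ)^j) ≤ Real.logb 2 ((1/δ)^2) :=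
            Real.logb_le_logb_of_le one_lt_two (by positivity) (le_trans hj1 e2)
          rw [e1, Real.logb_pow] at e3
          push_cast at e3
          linarith
        have : (j:ℤ) ≤ ⌊2 * Real.logb 2 (1/δ)⌋ := Int.le_floor.mpr (by exact_mod_cast hlogt)
        rw [hKdef]
        omega
      obtain ⟨i, hij⟩ : ∃ i, j = i + 1 := ⟨j - 1, by omega⟩
      have hiK : i ∈ Finset.range K := Finset.mem_range.mpr (by omega)
      refine Set.mem_biUnion hiK ⟨hx, ?_, ?_⟩
      · -- t < (1/2)^i
        have h2j : (0:ℝ) < 2^j := by positivity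
        have ht3 : t ≤ (1/2:ℝ)^j := by
          rw [div_pow, one_pow, le_div_iff₀ h2j]
          rw [le_div_iff₀ ht0] at hj1
          linarith
        have : ((1:ℝ)/2)^j < (1/2)^i := by
          rw [hij, pow_succ]
          have : (0:ℝ) < (1/2:ℝ)^i := by positivity
          linarith
        linarith
      · -- nint(bx+d) < δ^2 * 2^(i+2)
        have : δ^2 * (1/t) < δ^2 * 2^(i+2) := by
          apply mul_lt_mul_of_pos_left _ (by positivity)
          rw [show i + 2 = j + 1 by omega]
          exact hj2
        linarith
  -- apply lemE
  have bound0 := lemE a b c d (δ^2) 1 ha hab (by positivity) (by nlinarith) one_pos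
  have boundk : ∀ i : ℕ, volume {x ∈ Set.Icc (0:ℝ) 1 |
        nint (a*x+c) < (1/2:ℝ)^i ∧ nint (b*x+d) < δ^2 * 2^(i+2)}
      ≤ ENNReal.ofReal (24*((1/2:ℝ)^i*(δ^2 * 2^(i+2)))
          + 12*(g:ℝ)*(min ((1/2:ℝ)^i/a) ((δ^2 * 2^(i+2))/b))) := by
    intro i
    exact lemE a b c d ((1/2:ℝ)^i) (δ^2 * 2^(i+2)) ha hab (by positivity)
      (by apply pow_le_one₀ <;> norm_num) (by positivity)
  -- put everything together
  set T0 : ℝ := 24*(δ^2*1) + 12*(g:ℝ)*(min (δ^2/a) (1/(b:ℝ))) with hT0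
  set T : ℕ → ℝ := fun i => 24*((1/2:ℝ)^i*(δ^2 * 2^(i+2)))
      + 12*(g:ℝ)*(min ((1/2:ℝ)^i/a) ((δ^2 * 2^(i+2))/b)) with hT
  have hT0nn : 0 ≤ T0 := by
    rw [hT0]
    have : (0:ℝ) ≤ min (δ^2/a) (1/(b:ℝ)) := le_min (by positivity) (by positivity)
    positivity
  have hTnn : ∀ i, 0 ≤ T i := by
    intro i
    rw [hT]
    have : (0:ℝ) ≤ min ((1/2:ℝ)^i/a) ((δ^2 * 2^(i+2))/b) := le_min (by positivity) (by positivity)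
    positivity
  have main : volume {x ∈ Icc (0:ℝ) 1 | nint (a * x + c) * nint (b * x + d) < δ ^ 2}
      ≤ ENNReal.ofReal (T0 + ∑ i ∈ Finset.range K, T i) := by
    calc volume {x ∈ Icc (0:ℝ) 1 | nint (a * x + c) * nint (b * x + d) < δ ^ 2}
        ≤ volume ({x ∈ Icc (0:ℝ) 1 | nint (a*x+c) < δ^2 ∧ nint (b*x+d) < 1}
          ∪ ⋃ i ∈ Finset.range K, {x ∈ Icc (0:ℝ) 1 |
              nint (a*x+c) < (1/2:ℝ)^i ∧ nint (b*x+d) < δ^2 * 2^(i+2)}) := measure_mono cover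
      _ ≤ volume {x ∈ Icc (0:ℝ) 1 | nint (a*x+c) < δ^2 ∧ nint (b*x+d) < 1}
          + volume (⋃ i ∈ Finset.range K, {x ∈ Icc (0:ℝ) 1 |
              nint (a*x+c) < (1/2:ℝ)^i ∧ nint (b*x+d) < δ^2 * 2^(i+2)}) := measure_union_le _ _
      _ ≤ ENNReal.ofReal T0 + ∑ i ∈ Finset.range K, ENNReal.ofReal (T i) := by
          apply add_le_add
          · exact bound0
          · exact le_trans (measure_biUnion_finset_le _ _)
              (Finset.sum_le_sum (fun i _ => boundk i))
      _ = ENNReal.ofReal (T0 + ∑ i ∈ Finset.range K, T i) := by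
          rw [ENNReal.ofReal_add hT0nn (Finset.sum_nonneg (fun i _ => hTnn i)),
            ENNReal.ofReal_sum_of_nonneg (fun i _ => hTnn i)]
  refine le_trans main (ENNReal.ofReal_le_ofReal ?_)
  -- the real inequality
  set S : ℝ := Real.sqrt (δ^2/((a:ℝ)*b)) with hS
  have hSrpow : ((δ:ℝ)^2/((a:ℝ)*b)) ^ ((1:ℝ)/2) = S := by
    rw [hS, Real.sqrt_eq_rpow]
  have hminS : min (δ^2/(a:ℝ)) (1/(b:ℝ)) ≤ S := by
    have h0 : (0:ℝ) ≤ min (δ^2/(a:ℝ)) (1/(b:ℝ)) := le_min (by positivity) (by positivity)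
    rw [hS, Real.le_sqrt h0 (by positivity)]
    calc (min (δ^2/(a:ℝ)) (1/(b:ℝ)))^2
        = min (δ^2/(a:ℝ)) (1/(b:ℝ)) * min (δ^2/(a:ℝ)) (1/(b:ℝ)) := pow_two _
      _ ≤ (δ^2/(a:ℝ)) * (1/(b:ℝ)) :=
          mul_le_mul (min_le_left _ _) (min_le_right _ _) h0 (by positivity)
      _ = δ^2/((a:ℝ)*b) := by ring
  have hsum : ∑ i ∈ Finset.range K, min ((1/2:ℝ)^i/(a:ℝ)) ((δ^2 * 2^(i+2))/(b:ℝ)) ≤ 8*S := by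
    have hre : ∑ k ∈ Finset.Icc 1 K, min ((2/(a:ℝ)) * (1/2:ℝ)^k) ((2*δ^2/(b:ℝ)) * 2^k)
        = ∑ i ∈ Finset.range K, min ((1/2:ℝ)^i/(a:ℝ)) ((δ^2 * 2^(i+2))/(b:ℝ)) := by
      rw [show Finset.Icc 1 K = Finset.Ico 1 (K+1) by rw [Finset.Ico_add_one_right_eq_Icc]]
      rw [Finset.sum_Ico_eq_sum_range]
      simp only [Nat.add_sub_cancel]
      apply Finset.sum_congr rfl
      intro i _
      congr 1
      · field_simp
        ring
      · field_simp
        ring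
    have hgeo := sum_min_geom (2/(a:ℝ)) (2*δ^2/(b:ℝ)) (by positivity) (by positivity) K
    rw [hre] at hgeo
    refine le_trans hgeo ?_
    have huv : (2/(a:ℝ)) * (2*δ^2/(b:ℝ)) = 2^2*(δ^2/((a:ℝ)*b)) := by
      field_simp
    rw [huv, Real.sqrt_mul (by positivity) _, Real.sqrt_sq (by norm_num : (0:ℝ) ≤ 2), hS]
    linarith [Real.sqrt_nonneg (δ^2/((a:ℝ)*b))]
  have hTsum : ∑ i ∈ Finset.range K, T i
      = 96*K*δ^2 + 12*(g:ℝ)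
        * ∑ i ∈ Finset.range K, min ((1/2:ℝ)^i/(a:ℝ)) ((δ^2 * 2^(i+2))/(b:ℝ)) := by
    have hcong : ∀ i ∈ Finset.range K, T i
        = 96*δ^2 + 12*(g:ℝ)*(min ((1/2:ℝ)^i/(a:ℝ)) ((δ^2 * 2^(i+2))/(b:ℝ))) := by
      intro i _
      simp only [hT]
      have h1 : ((1:ℝ)/2)^i * 2^i = 1 := by
        rw [← mul_pow]; norm_num
      have h4 : (1/2:ℝ)^i*(δ^2 * 2^(i+2)) = 4*δ^2 := by
        calc (1/2:ℝ)^i*(δ^2 * 2^(i+2)) = ((1/2:ℝ)^i * 2^i)*(4*δ^2) := by ring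
          _ = 4*δ^2 := by rw [h1]; ring
      rw [h4]
      ring
    rw [Finset.sum_congr rfl hcong, Finset.sum_add_distrib, Finset.sum_const,
      Finset.card_range, ← Finset.mul_sum, nsmul_eq_mul]
    ring
  have hclog1 : 1 ≤ clog (1/δ) := le_max_left _ _
  have hδinv : (1:ℝ) ≤ 1/δ := by rw [le_div_iff₀ hδ0]; linarith
  have hlognn : 0 ≤ Real.log (1/δ) := Real.log_nonneg hδinv
  have hclog2 : Real.log (1/δ) ≤ clog (1/δ) := le_max_right _ _
  have hKbound : (K:ℝ) ≤ 3 * clog (1/δ) := by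
    have h1 : (K:ℝ) ≤ 2 * Real.logb 2 (1/δ) := by
      have hnn : 0 ≤ 2 * Real.logb 2 (1/δ) := by
        have := Real.logb_nonneg one_lt_two hδinv
        linarith
      rw [hKdef]
      calc ((⌊2 * Real.logb 2 (1/δ)⌋.toNat : ℕ) : ℝ)
          = ((⌊2 * Real.logb 2 (1/δ)⌋ : ℤ) : ℝ) := by
            exact_mod_cast Int.toNat_of_nonneg (Int.floor_nonneg.mpr hnn)
        _ ≤ 2 * Real.logb 2 (1/δ) := Int.floor_le _
    have hl2p : 0 < Real.log 2 := Real.log_pos one_lt_two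
    have hl2 : (2:ℝ)/3 ≤ Real.log 2 := by
      have := Real.log_two_gt_d9; linarith
    have h2 : 2 * Real.logb 2 (1/δ) ≤ 3 * Real.log (1/δ) := by
      rw [Real.logb, mul_comm, div_mul_eq_mul_div, div_le_iff₀ hl2p]
      nlinarith
    linarith
  have hKD : (K:ℝ)*δ^2 ≤ (3*clog (1/δ))*δ^2 :=
    mul_le_mul_of_nonneg_right hKbound (by positivity)
  have hDL : δ^2 ≤ δ^2 * clog (1/δ) := le_mul_of_one_le_right (by positivity) hclog1
  have hS0 : 0 ≤ S := Real.sqrt_nonneg _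
  have hgM : 12*(g:ℝ)*(min (δ^2/(a:ℝ)) (1/(b:ℝ))) ≤ 12*(g:ℝ)*S := by
    apply mul_le_mul_of_nonneg_left hminS (by positivity)
  have hgG : 12*(g:ℝ)*(∑ i ∈ Finset.range K, min ((1/2:ℝ)^i/(a:ℝ)) ((δ^2 * 2^(i+2))/(b:ℝ)))
      ≤ 12*(g:ℝ)*(8*S) := mul_le_mul_of_nonneg_left hsum (by positivity)
  rw [hSrpow, hTsum, hT0]
  have h0gS : 0 ≤ (g:ℝ)*S := by positivity
  have h0DL : 0 ≤ δ^2 * clog (1/δ) := by positivity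
  nlinarith [hKD, hDL, hgM, hgG, h0gS, h0DL]
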